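/- Let Q_t: S × A → ℝ be the true action-value function at state s, and let Q_0, G: S × A → ℝ be two estimates satisfying |Q_0(s,a) - Q_t(s,a)| ≤ ε and |G(s,a) - Q_t(s,a)| ≤ δ for all a. Let a* = argmax_a Q_t(s,a), a' the second-best action, and ψ = Q_t(s,a*) - Q_t(s,a'). Fix α ∈ [0,1]. If αε + (1-α)δ ≤ ψ/2, then for every action a ≠ a*: αQ_0(s,a) + (1-α)G(s,a) ≤ αQ_0(s,a*) + (1-α)G(s,a*), i.e., PA-MCTS selects the optimal action. -/
import Mathlib

/-- PA-MCTS one-step optimality: if `α ε + (1 - α) δ ≤ ψ / 2`, then the convex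
combination of the stale Q-values and the MCTS estimates is maximized at the
optimal action. -/
theorem pamcts_selects_optimal
    {A : Type*} [Fintype A]
    (Qt Q0 G : A → ℝ) (ε δ α : ℝ)
    (hε : ∀ a, |Q0 a - Qt a| ≤ ε)
    (hδ : ∀ a, |G a - Qt a| ≤ δ)
    (hα0 : 0 ≤ α) (hα1 : α ≤ 1)
    (astar asecond : A)
    (hne : asecond ≠ astar)
    (hmax : ∀ a, a ≠ astar → Qt a ≤ Qt astar)
    (hsecond : ∀ a, a ≠ astar → Qt a ≤ Qt asecond)
    (hcond : α * ε + (1 - α) * δ ≤ (Qt astar - Qt asecond) / 2) :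
    ∀ a, a ≠ astar →
      α * Q0 a + (1 - α) * G a ≤ α * Q0 astar + (1 - α) * G astar := by
  intro a ha
  have h1 := abs_le.mp (hε a)
  have h2 := abs_le.mp (hδ a)
  have h3 := abs_le.mp (hε astar)
  have h4 := abs_le.mp (hδ astar)
  have h5 := hsecond a ha
  nlinarith [h1.1, h1.2, h2.1, h2.2, h3.1, h3.2, h4.1, h4.2,
    mul_nonneg hα0 (sub_nonneg.mpr h5), sub_nonneg.mpr hα1]
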